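/- Let f = f_n/f_d ∈ K(t) be nonconstant of degree n with f_n, f_d ∈ K[t] coprime and Φ_f monic. Let G_1, …, G_r ∈ K[x,t] be the irreducible factors of ∇_f, normalized so that ∇_f = G_1 ⋯ G_r, and let m_i ∈ K[t] be the leading coefficient of G_i with respect to x. Then m_1 ⋯ m_r = f_d(t), the polynomials F_i := G_i/m_i ∈ K(t)[x] are monic and irreducible, ∇_f/f_d(t) = Φ_f(x) = F_1 ⋯ F_r in K(t)[x], and ∑_{i=1}^r deg_t(G_i) = n = ∑_{i=1}^r deg_x(G_i). -/

import Mathlib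

open Polynomial

/-- `Φ_g(x) := g_n(x) − g(t)·g_d(x) ∈ K(t)[x]`, where `g = g_n/g_d` with `g_n, g_d` coprime. -/
noncomputable def Phi {K : Type*} [Field K] (g : RatFunc K) : Polynomial (RatFunc K) :=
  g.num.map (algebraMap K (RatFunc K)) - Polynomial.C g * (g.denom.map (algebraMap K (RatFunc K)))

/-- `∇_g(x,t) := g_n(x)·g_d(t) − g_n(t)·g_d(x) ∈ K[x,t]`, as a polynomial in `x` over `K[t]`. -/
noncomputable def Nabla {K : Type*} [Field K] (g : RatFunc K) : Polynomial (Polynomial K) :=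
  g.num.map Polynomial.C * Polynomial.C g.denom - Polynomial.C g.num * (g.denom.map Polynomial.C)

/-- A rational function is nonconstant if it is not of the form `C c`. -/
def Nonconst {K : Type*} [Field K] (g : RatFunc K) : Prop := ∀ c : K, g ≠ RatFunc.C c

/-- The degree in `t` of a bivariate polynomial `G ∈ K[t][x]`. -/
noncomputable def degT {K : Type*} [Field K] (G : Polynomial (Polynomial K)) : ℕ :=
  G.support.sup fun k => (G.coeff k).natDegree

section Aux

variable {K : Type*} [Field K]

/-- The ring homomorphism `K[t][x] → K[x][t]` swapping the two variables. -/
noncomputable def swapPoly : Polynomial (Polynomial K) →+* Polynomial (Polynomial K) :=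
  eval₂RingHom (mapRingHom Polynomial.C) (Polynomial.C Polynomial.X)

lemma swapPoly_coeff_coeff (G : Polynomial (Polynomial K)) (j k : ℕ) :
    ((swapPoly G).coeff j).coeff k = (G.coeff k).coeff j := by
  induction G using Polynomial.induction_on' with
  | add p q hp hq => simp [hp, hq]
  | monomial m c =>
    simp only [swapPoly, coe_eval₂RingHom, eval₂_monomial, coe_mapRingHom, ← Polynomial.C_pow,
      Polynomial.coeff_mul_C, Polynomial.coeff_map, Polynomial.coeff_monomial]
    rw [Polynomial.C_mul_X_pow_eq_monomial, Polynomial.coeff_monomial]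
    split_ifs <;> simp_all

lemma swapPoly_map (p : Polynomial K) :
    swapPoly (p.map Polynomial.C) = Polynomial.C p := by
  ext j k
  rw [swapPoly_coeff_coeff]
  simp only [Polynomial.coeff_map, Polynomial.coeff_C]
  split_ifs <;> simp

lemma swapPoly_C (p : Polynomial K) : swapPoly (Polynomial.C p) = p.map Polynomial.C :=
  eval₂_C _ _

lemma swapPoly_eq_zero_iff {G : Polynomial (Polynomial K)} : swapPoly G = 0 ↔ G = 0 := by
  constructor
  · intro h
    ext k j
    have h2 := swapPoly_coeff_coeff G j k
    rw [h] at h2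
    simpa using h2.symm
  · rintro rfl; simp

lemma degT_eq_natDegree_swap (G : Polynomial (Polynomial K)) :
    degT G = (swapPoly G).natDegree := by
  apply le_antisymm
  · apply Finset.sup_le
    intro k hk
    have h1 : G.coeff k ≠ 0 := mem_support_iff.mp hk
    apply Polynomial.le_natDegree_of_ne_zero (n := (G.coeff k).natDegree)
    intro h
    apply h1
    have h2 := swapPoly_coeff_coeff G ((G.coeff k).natDegree) k
    rw [h] at h2
    rw [Polynomial.coeff_zero] at h2
    exact Polynomial.leadingCoeff_eq_zero.mp h2.symm
  · rw [Polynomial.natDegree_le_iff_coeff_eq_zero]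
    intro j hj
    ext k
    rw [swapPoly_coeff_coeff, Polynomial.coeff_zero]
    by_cases h : G.coeff k = 0
    · simp [h]
    · exact Polynomial.coeff_eq_zero_of_natDegree_lt
        (lt_of_le_of_lt (Finset.le_sup (f := fun k => (G.coeff k).natDegree)
          (mem_support_iff.mpr h)) hj)

lemma swapPoly_nabla (f : RatFunc K) : swapPoly (Nabla f) = -(Nabla f) := by
  unfold Nabla
  rw [map_sub, map_mul, map_mul, swapPoly_C, swapPoly_map, swapPoly_C, swapPoly_map]
  ring

lemma nabla_map (f : RatFunc K) :
    (Nabla f).map (algebraMap (Polynomial K) (RatFunc K)) =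
      Polynomial.C (algebraMap (Polynomial K) (RatFunc K) f.denom) * Phi f := by
  have hden : algebraMap (Polynomial K) (RatFunc K) f.denom ≠ 0 :=
    RatFunc.algebraMap_ne_zero (f.denom_ne_zero)
  have hnum : algebraMap (Polynomial K) (RatFunc K) f.num =
      f * algebraMap (Polynomial K) (RatFunc K) f.denom :=
    (div_eq_iff hden).mp (RatFunc.num_div_denom f)
  have hcomp : (algebraMap (Polynomial K) (RatFunc K)).comp Polynomial.C =
      algebraMap K (RatFunc K) := by
    rw [IsScalarTower.algebraMap_eq K (Polynomial K) (RatFunc K), Polynomial.algebraMap_eq]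
  unfold Nabla Phi
  rw [Polynomial.map_sub, Polynomial.map_mul, Polynomial.map_mul, Polynomial.map_map,
    Polynomial.map_C, Polynomial.map_C, Polynomial.map_map, hcomp, hnum, Polynomial.C_mul]
  ring

lemma natDegree_phi (f : RatFunc K) (hf : Nonconst f) :
    (Phi f).natDegree = max f.num.natDegree f.denom.natDegree := by
  have hCinj : Function.Injective (algebraMap K (RatFunc K)) := RingHom.injective _
  have hf0 : f ≠ 0 := fun h => hf 0 (by simpa using h)
  have hnum0 : f.num ≠ 0 := RatFunc.num_ne_zero hf0
  set n := max f.num.natDegree f.denom.natDegree with hn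
  have hle : (Phi f).natDegree ≤ n := by
    refine le_trans (Polynomial.natDegree_sub_le _ _) (max_le ?_ ?_)
    · rw [Polynomial.natDegree_map]
      exact le_max_left _ _
    · refine le_trans (Polynomial.natDegree_C_mul_le _ _) ?_
      rw [Polynomial.natDegree_map]
      exact le_max_right _ _
  have hcoeff : (Phi f).coeff n ≠ 0 := by
    have hc : (Phi f).coeff n = algebraMap K (RatFunc K) (f.num.coeff n) -
        f * algebraMap K (RatFunc K) (f.denom.coeff n) := by
      simp [Phi, Polynomial.coeff_map, Polynomial.coeff_C_mul]
    rw [hc, RatFunc.algebraMap_eq_C]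
    intro h0
    have h0' : RatFunc.C (f.num.coeff n) = f * RatFunc.C (f.denom.coeff n) :=
      sub_eq_zero.mp h0
    by_cases hb : f.denom.coeff n = 0
    · rw [hb, map_zero, mul_zero] at h0'
      have ha : f.num.coeff n = 0 := by
        have := RatFunc.algebraMap_eq_C (K := K) ▸ hCinj
        exact this (by simpa using h0')
      rcases max_choice f.num.natDegree f.denom.natDegree with h | h
      · rw [hn, h] at ha
        exact hnum0 (Polynomial.leadingCoeff_eq_zero.mp ha)
      · rw [hn, h] at hb
        exact f.denom_ne_zero (Polynomial.leadingCoeff_eq_zero.mp hb)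
    · have hCb : (RatFunc.C (f.denom.coeff n) : RatFunc K) ≠ 0 := fun h =>
        hb (by simpa using (RatFunc.algebraMap_eq_C (K := K) ▸ hCinj) (by simpa using h))
      refine hf (f.num.coeff n / f.denom.coeff n) ?_
      rw [map_div₀, eq_div_iff hCb, ← h0']
  exact le_antisymm hle (Polynomial.le_natDegree_of_ne_zero hcoeff)

lemma nabla_coeff (f : RatFunc K) (k : ℕ) :
    (Nabla f).coeff k = Polynomial.C (f.num.coeff k) * f.denom -
      f.num * Polynomial.C (f.denom.coeff k) := by
  simp [Nabla, Polynomial.coeff_mul_C, Polynomial.coeff_C_mul, Polynomial.coeff_map]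

lemma nabla_isPrimitive (f : RatFunc K) (hf : Nonconst f) (hN : Nabla f ≠ 0) :
    (Nabla f).IsPrimitive := by
  intro s hs
  by_contra hsu
  have hf0 : f ≠ 0 := fun h => hf 0 (by simpa using h)
  have hs0 : s ≠ 0 := by
    rintro rfl
    rw [map_zero, zero_dvd_iff] at hs
    exact hN hs
  obtain ⟨p, hpirr, hps⟩ := WfDvdMonoid.exists_irreducible_factor hsu hs0
  have hpprime : Prime p := hpirr.prime
  have hsc := (Polynomial.C_dvd_iff_dvd_coeff s (Nabla f)).mp hs
  have hpN : ∀ k, p ∣ Polynomial.C (f.num.coeff k) * f.denom -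
      f.num * Polynomial.C (f.denom.coeff k) := by
    intro k
    have h2 := dvd_trans hps (hsc k)
    rwa [nabla_coeff] at h2
  by_cases hpd : p ∣ f.denom
  · have hpnum : ¬ p ∣ f.num := by
      intro hpn
      obtain ⟨u, v, huv⟩ := RatFunc.isCoprime_num_denom f
      have hone : p ∣ (1 : Polynomial K) := by
        rw [← huv]
        exact dvd_add (hpn.mul_left u) (hpd.mul_left v)
      exact hpirr.not_isUnit (isUnit_of_dvd_one hone)
    have hbk : ∀ k, f.denom.coeff k = 0 := by
      intro k
      have h2 : p ∣ f.num * Polynomial.C (f.denom.coeff k) := by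
        have h3 := dvd_sub (hpd.mul_left (Polynomial.C (f.num.coeff k))) (hpN k)
        simpa using h3
      rcases hpprime.2.2 _ _ h2 with h | h
      · exact absurd h hpnum
      · by_contra hbk0
        exact hpirr.not_isUnit (isUnit_of_dvd_unit h
          (Polynomial.isUnit_C.mpr (isUnit_iff_ne_zero.mpr hbk0)))
    exact f.denom_ne_zero (Polynomial.ext fun k => by simp [hbk k])
  · have hbl : f.denom.coeff f.denom.natDegree ≠ 0 := by
      have h4 := Polynomial.leadingCoeff_ne_zero.mpr f.denom_ne_zero
      rwa [Polynomial.leadingCoeff] at h4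
    set l := f.denom.natDegree with hl
    have hkey : ∀ k, f.num.coeff k * f.denom.coeff l = f.num.coeff l * f.denom.coeff k := by
      intro k
      have hcomb : Polynomial.C (f.denom.coeff l) *
            (Polynomial.C (f.num.coeff k) * f.denom - f.num * Polynomial.C (f.denom.coeff k))
          - Polynomial.C (f.denom.coeff k) *
            (Polynomial.C (f.num.coeff l) * f.denom - f.num * Polynomial.C (f.denom.coeff l))
          = Polynomial.C (f.num.coeff k * f.denom.coeff l - f.num.coeff l * f.denom.coeff k)
              * f.denom := by
        simp only [map_sub, map_mul]; ring
      have hdvd : p ∣ Polynomial.C (f.num.coeff k * f.denom.coeff l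
          - f.num.coeff l * f.denom.coeff k) * f.denom :=
        hcomb ▸ dvd_sub ((hpN k).mul_left _) ((hpN l).mul_left _)
      rcases hpprime.2.2 _ _ hdvd with h | h
      · by_contra hne
        exact hpirr.not_isUnit (isUnit_of_dvd_unit h
          (Polynomial.isUnit_C.mpr (isUnit_iff_ne_zero.mpr (sub_ne_zero.mpr hne))))
      · exact absurd h hpd
    have hnum_eq : f.num = Polynomial.C (f.num.coeff l / f.denom.coeff l) * f.denom := by
      ext k
      rw [Polynomial.coeff_C_mul, div_mul_eq_mul_div, eq_div_iff hbl]
      exact hkey k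
    refine hf (f.num.coeff l / f.denom.coeff l) ?_
    conv_lhs => rw [← RatFunc.num_div_denom f, hnum_eq]
    rw [map_mul, RatFunc.algebraMap_C, mul_div_assoc,
      div_self (RatFunc.algebraMap_ne_zero f.denom_ne_zero), mul_one]

end Aux

theorem stmt_6 {K : Type*} [Field K] (f : RatFunc K) (hf : Nonconst f)
    (hmonic : (Phi f).Monic)
    (n : ℕ) (hn : n = max f.num.natDegree f.denom.natDegree)
    (r : ℕ) (G : Fin r → Polynomial (Polynomial K))
    (hGirr : ∀ i, Irreducible (G i)) (hfact : Nabla f = ∏ i, G i) :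
    (∏ i, (G i).leadingCoeff) = f.denom ∧
    (∀ i, (Polynomial.C ((algebraMap (Polynomial K) (RatFunc K) (G i).leadingCoeff)⁻¹) *
        (G i).map (algebraMap (Polynomial K) (RatFunc K))).Monic) ∧
    (∀ i, Irreducible (Polynomial.C ((algebraMap (Polynomial K) (RatFunc K) (G i).leadingCoeff)⁻¹) *
        (G i).map (algebraMap (Polynomial K) (RatFunc K)))) ∧
    Polynomial.C ((algebraMap (Polynomial K) (RatFunc K) f.denom)⁻¹) *
        (Nabla f).map (algebraMap (Polynomial K) (RatFunc K)) = Phi f ∧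
    Phi f = ∏ i, (Polynomial.C ((algebraMap (Polynomial K) (RatFunc K) (G i).leadingCoeff)⁻¹) *
        (G i).map (algebraMap (Polynomial K) (RatFunc K))) ∧
    (∑ i, degT (G i)) = n ∧
    (∑ i, (G i).natDegree) = n := by
  letI := Classical.decEq K
  set A := algebraMap (Polynomial K) (RatFunc K) with hA
  have injA : Function.Injective A := RatFunc.algebraMap_injective K
  have hdenA : A f.denom ≠ 0 := RatFunc.algebraMap_ne_zero f.denom_ne_zero
  have key : (Nabla f).map A = Polynomial.C (A f.denom) * Phi f := nabla_map f
  have stmt4 : Polynomial.C ((A f.denom)⁻¹) * (Nabla f).map A = Phi f := by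
    rw [key, ← mul_assoc, ← Polynomial.C_mul, inv_mul_cancel₀ hdenA, Polynomial.C_1, one_mul]
  have hPhideg : (Phi f).natDegree = n := by rw [natDegree_phi f hf, hn]
  have lcNabla : (Nabla f).leadingCoeff = f.denom := by
    apply injA
    rw [← Polynomial.leadingCoeff_map_of_injective injA, key, Polynomial.leadingCoeff_mul,
      Polynomial.leadingCoeff_C, hmonic.leadingCoeff, mul_one]
  have hN0 : Nabla f ≠ 0 := fun h => f.denom_ne_zero (by rw [← lcNabla, h, leadingCoeff_zero])
  have stmt1 : (∏ i, (G i).leadingCoeff) = f.denom := by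
    rw [← Polynomial.leadingCoeff_prod, ← hfact, lcNabla]
  have hGne : ∀ i, G i ≠ 0 := fun i => (hGirr i).ne_zero
  have hmi : ∀ i, (G i).leadingCoeff ≠ 0 := fun i =>
    Polynomial.leadingCoeff_ne_zero.mpr (hGne i)
  have hmiA : ∀ i, A ((G i).leadingCoeff) ≠ 0 := fun i =>
    RatFunc.algebraMap_ne_zero (hmi i)
  have stmt2 : ∀ i, (Polynomial.C ((A (G i).leadingCoeff)⁻¹) * (G i).map A).Monic := by
    intro i
    rw [Polynomial.Monic, Polynomial.leadingCoeff_mul, Polynomial.leadingCoeff_C,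
      Polynomial.leadingCoeff_map_of_injective injA, inv_mul_cancel₀ (hmiA i)]
  have hprim : (Nabla f).IsPrimitive := nabla_isPrimitive f hf hN0
  have hGprim : ∀ i, (G i).IsPrimitive := by
    intro i s hs
    exact hprim s (hs.trans (hfact ▸ Finset.dvd_prod_of_mem G (Finset.mem_univ i)))
  have stmt3 : ∀ i, Irreducible (Polynomial.C ((A (G i).leadingCoeff)⁻¹) * (G i).map A) := by
    intro i
    have h1 : Irreducible ((G i).map A) :=
      ((hGprim i).irreducible_iff_irreducible_map_fraction_map).mp (hGirr i)
    have hu : IsUnit (Polynomial.C ((A (G i).leadingCoeff)⁻¹) : Polynomial (RatFunc K)) :=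
      Polynomial.isUnit_C.mpr (isUnit_iff_ne_zero.mpr (inv_ne_zero (hmiA i)))
    exact (Associated.irreducible ⟨hu.unit, by rw [IsUnit.unit_spec, mul_comm]⟩ h1)
  have hprodA : (∏ i, A ((G i).leadingCoeff)) = A f.denom := by
    rw [← map_prod, stmt1]
  have stmt5 : Phi f = ∏ i, (Polynomial.C ((A (G i).leadingCoeff)⁻¹) * (G i).map A) := by
    rw [← stmt4, hfact, Polynomial.map_prod, Finset.prod_mul_distrib,
      ← map_prod (Polynomial.C : RatFunc K →+* Polynomial (RatFunc K)),
      Finset.prod_inv_distrib, hprodA]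
  have hNdeg : (Nabla f).natDegree = n := by
    rw [← natDegree_map_eq_of_injective injA, key, Polynomial.natDegree_C_mul hdenA, hPhideg]
  have stmt7 : (∑ i, (G i).natDegree) = n := by
    rw [← hNdeg, hfact, Polynomial.natDegree_prod _ _ (fun i _ => hGne i)]
  have stmt6 : (∑ i, degT (G i)) = n := by
    have hs0 : ∀ i, swapPoly (G i) ≠ 0 := fun i h => hGne i (swapPoly_eq_zero_iff.mp h)
    calc (∑ i, degT (G i)) = ∑ i, (swapPoly (G i)).natDegree := by
            simp only [degT_eq_natDegree_swap]
      _ = (∏ i, swapPoly (G i)).natDegree :=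
            (Polynomial.natDegree_prod _ _ (fun i _ => hs0 i)).symm
      _ = (swapPoly (∏ i, G i)).natDegree := by rw [map_prod]
      _ = (swapPoly (Nabla f)).natDegree := by rw [hfact]
      _ = (Nabla f).natDegree := by rw [swapPoly_nabla, natDegree_neg]
      _ = n := hNdeg
  exact ⟨stmt1, stmt2, stmt3, stmt4, stmt5, stmt6, stmt7⟩
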